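/- For every cubic graph G with vertex ordering v_1,…,v_n (n ≥ 4) and edge ordering e_1,…,e_m, and all positive integers p, q, p', q', the reduction graph G' is not an interval graph. -/

import Mathlib

/-- The vertices of the reduction graph `G'`: for each `i ∈ [n]` a `(p,q)`-grained
gadget `H_i` with parts `K'_i` (`vK1`), `K''_i` (`vK2`), `S'_i` (`vS1`), `S''_i` (`vS2`);
for each `j ∈ [m]` a `(p',q')`-grained gadget `E_j` with parts `K'ᵉ_j` (`eK1`),
`K''ᵉ_j` (`eK2`), `S'ᵉ_j` (`eS1`), `S''ᵉ_j` (`eS2`); and for each `j ∈ [m]` four link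
vertices `link lr s j`, where `lr = false` selects the smaller endpoint index of the
edge `e_j` and `lr = true` the larger one, and `s` distinguishes `L¹` (`s = false`)
from `L²` (`s = true`). -/
inductive RVert (n m p q p' q' : ℕ) : Type where
  | vK1 : Fin n → Fin q → RVert n m p q p' q'
  | vK2 : Fin n → Fin q → RVert n m p q p' q'
  | vS1 : Fin n → Fin p → RVert n m p q p' q'
  | vS2 : Fin n → Fin p → RVert n m p q p' q'
  | eK1 : Fin m → Fin q' → RVert n m p q p' q'
  | eK2 : Fin m → Fin q' → RVert n m p q p' q'
  | eS1 : Fin m → Fin p' → RVert n m p q p' q'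
  | eS2 : Fin m → Fin p' → RVert n m p q p' q'
  | link : Bool → Bool → Fin m → RVert n m p q p' q'
  deriving DecidableEq

/-- Given the two endpoint functions `ep1 ep2 : Fin m → Fin n` of the ordered edges
(`ep1 j < ep2 j`), the vertex index associated with the link vertex `link lr s j`. -/
def linkIdx {n m : ℕ} (ep1 ep2 : Fin m → Fin n) (lr : Bool) (j : Fin m) : Fin n :=
  if lr then ep2 j else ep1 j

/-- One-directional description of the adjacencies of the reduction graph `G'`. -/
def radj {n m p q p' q' : ℕ} (ep1 ep2 : Fin m → Fin n) :
    RVert n m p q p' q' → RVert n m p q p' q' → Prop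
  | .vK1 i _, .vK1 i' _ => i = i'
  | .vK1 i _, .vK2 i' _ => i = i'
  | .vK2 i _, .vK2 i' _ => i = i'
  | .vK1 i _, .vS1 i' _ => i = i'
  | .vK2 i _, .vS2 i' _ => i = i'
  | .eK1 j _, .eK1 j' _ => j = j'
  | .eK1 j _, .eK2 j' _ => j = j'
  | .eK2 j _, .eK2 j' _ => j = j'
  | .eK1 j _, .eS1 j' _ => j = j'
  | .eK2 j _, .eS2 j' _ => j = j'
  | .link lr _ j, .vK1 k _ => linkIdx ep1 ep2 lr j < k
  | .link lr _ j, .vK2 k _ => linkIdx ep1 ep2 lr j ≤ k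
  | .link lr _ j, .vS1 k _ => linkIdx ep1 ep2 lr j < k
  | .link lr _ j, .vS2 k _ => linkIdx ep1 ep2 lr j < k
  | .link _ _ j, .eK1 l _ => l ≤ j
  | .link _ _ j, .eK2 l _ => l < j
  | .link lr _ j, .eS1 l _ => l < j ∨ (l = j ∧ lr = false)
  | .link _ _ j, .eS2 l _ => l < j
  | .link lr _ j, .link lr' _ l =>
      (linkIdx ep1 ep2 lr j < linkIdx ep1 ep2 lr' l ∧ l ≤ j) ∨
      (linkIdx ep1 ep2 lr' l < linkIdx ep1 ep2 lr j ∧ j ≤ l) ∨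
      (linkIdx ep1 ep2 lr j = linkIdx ep1 ep2 lr' l ∧ j = l)
  | _, _ => False

/-- The reduction graph `G'`. -/
def reductionGraph (n m p q p' q' : ℕ) (ep1 ep2 : Fin m → Fin n) :
    SimpleGraph (RVert n m p q p' q') where
  Adj u v := u ≠ v ∧ (radj ep1 ep2 u v ∨ radj ep1 ep2 v u)
  symm := ⟨fun u v h => ⟨h.1.symm, h.2.symm⟩⟩
  loopless := ⟨fun u h => h.1 rfl⟩


/-- `G` is an interval graph. -/
def IsIntervalGraph {V : Type} (G : SimpleGraph V) : Prop :=
  ∃ lo hi : V → ℝ, (∀ v, lo v ≤ hi v) ∧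
    ∀ u v : V, u ≠ v →
      (G.Adj u v ↔ (Set.Icc (lo u) (hi u) ∩ Set.Icc (lo v) (hi v)).Nonempty)


private lemma mem_of_meets {lb hb la ha lc hc : ℝ}
    (h1 : (Set.Icc la ha ∩ Set.Icc lb hb).Nonempty)
    (h2 : (Set.Icc lc hc ∩ Set.Icc lb hb).Nonempty) (hlt : ha ≤ lc) :
    ha ∈ Set.Icc lb hb := by
  obtain ⟨x, hx1, hx2⟩ := h1
  obtain ⟨y, hy1, hy2⟩ := h2
  exact ⟨hx2.1.trans hx1.2, le_trans (hlt.trans hy1.1) hy2.2⟩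

private lemma no_induced_C4 {V : Type} {G : SimpleGraph V} (h : IsIntervalGraph G)
    {a b c d : V} (hab : G.Adj a b) (hbc : G.Adj b c) (hcd : G.Adj c d) (hda : G.Adj d a)
    (hac : ¬ G.Adj a c) (hbd : ¬ G.Adj b d)
    (hne_ac : a ≠ c) (hne_bd : b ≠ d) : False := by
  obtain ⟨lo, hi, hlh, hspec⟩ := h
  have hI : ∀ u v : V, G.Adj u v →
      (Set.Icc (lo u) (hi u) ∩ Set.Icc (lo v) (hi v)).Nonempty := by
    intro u v huv
    exact (hspec u v huv.ne).mp huv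
  have hprime : ∀ u v : V, G.Adj u v →
      (Set.Icc (lo u) (hi u) ∩ Set.Icc (lo v) (hi v)).Nonempty := hI
  have hswap : ∀ u v : V, G.Adj u v →
      (Set.Icc (lo u) (hi u) ∩ Set.Icc (lo v) (hi v)).Nonempty := hI
  have key : hi a < lo c ∨ hi c < lo a := by
    by_contra hcon
    push_neg at hcon
    have : (Set.Icc (lo a) (hi a) ∩ Set.Icc (lo c) (hi c)).Nonempty :=
      ⟨max (lo a) (lo c), ⟨le_max_left _ _, max_le (hlh a) hcon.1⟩,
        ⟨le_max_right _ _, max_le hcon.2 (hlh c)⟩⟩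
    exact hac ((hspec a c hne_ac).mpr this)
  have hflip : ∀ {u v : V}, G.Adj u v →
      (Set.Icc (lo v) (hi v) ∩ Set.Icc (lo u) (hi u)).Nonempty := by
    intro u v huv
    obtain ⟨x, hx1, hx2⟩ := hI u v huv
    exact ⟨x, hx2, hx1⟩
  rcases key with hlt | hlt
  · have hb : hi a ∈ Set.Icc (lo b) (hi b) :=
      mem_of_meets (hI a b hab) (hflip hbc) hlt.le
    have hd : hi a ∈ Set.Icc (lo d) (hi d) :=
      mem_of_meets (hflip hda) (hI c d hcd) hlt.le
    exact hbd ((hspec b d hne_bd).mpr ⟨hi a, hb, hd⟩)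
  · have hb : hi c ∈ Set.Icc (lo b) (hi b) :=
      mem_of_meets (hflip hbc) (hI a b hab) hlt.le
    have hd : hi c ∈ Set.Icc (lo d) (hi d) :=
      mem_of_meets (hI c d hcd) (hflip hda) hlt.le
    exact hbd ((hspec b d hne_bd).mpr ⟨hi c, hb, hd⟩)

/-- the reduction graph `G'` is not an interval graph. -/
theorem reductionGraph_not_isIntervalGraph (n m : ℕ) (hn : 4 ≤ n) (G : SimpleGraph (Fin n))
    (hcubic : ∀ v : Fin n, (G.neighborSet v).ncard = 3)
    (ep1 ep2 : Fin m → Fin n) (hlt : ∀ j, ep1 j < ep2 j)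
    (hedges : ∀ u v : Fin n,
      G.Adj u v ↔ ∃ j, (ep1 j = u ∧ ep2 j = v) ∨ (ep1 j = v ∧ ep2 j = u))
    (hinj : Function.Injective fun j => (ep1 j, ep2 j))
    (p q p' q' : ℕ) (hp : 0 < p) (hq : 0 < q) (hp' : 0 < p') (hq' : 0 < q') :
    ¬ IsIntervalGraph (reductionGraph n m p q p' q' ep1 ep2) := by
  intro hIG
  -- pick a vertex `v` and two distinct edges `j ≠ l` incident to `v`
  have hn0 : 0 < n := by omega
  set v : Fin n := ⟨0, hn0⟩ with hv
  have h3 : (G.neighborSet v).ncard = 3 := hcubic v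
  have h1lt : 1 < (G.neighborSet v).ncard := by omega
  obtain ⟨u1, hu1, u2, hu2, hune⟩ := (Set.one_lt_ncard (Set.toFinite _)).mp h1lt
  have hadj1 : G.Adj v u1 := hu1
  have hadj2 : G.Adj v u2 := hu2
  obtain ⟨j1, hj1⟩ := (hedges v u1).mp hadj1
  obtain ⟨j2, hj2⟩ := (hedges v u2).mp hadj2
  have hjne : j1 ≠ j2 := by
    rintro rfl
    rcases hj1 with ⟨h1, h2⟩ | ⟨h1, h2⟩ <;> rcases hj2 with ⟨h3, h4⟩ | ⟨h3, h4⟩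
    · exact hune (h2.symm.trans h4)
    · exact hadj1.ne' (h2.symm.trans h4)
    · exact hadj1.ne' (h1.symm.trans h3)
    · exact hune (h1.symm.trans h3)
  have hlr : ∀ (jj : Fin m) (u : Fin n),
      ((ep1 jj = v ∧ ep2 jj = u) ∨ (ep1 jj = u ∧ ep2 jj = v)) →
      ∃ lr : Bool, linkIdx ep1 ep2 lr jj = v := by
    rintro jj u (⟨h1, _⟩ | ⟨_, h2⟩)
    · exact ⟨false, h1⟩
    · exact ⟨true, h2⟩
  obtain ⟨lr1, hlr1⟩ := hlr j1 u1 hj1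
  obtain ⟨lr2, hlr2⟩ := hlr j2 u2 hj2
  -- order the two edges
  obtain ⟨j, l, lrj, lrl, hjl, hvj, hvl⟩ :
      ∃ (j l : Fin m) (lrj lrl : Bool), j < l ∧
        linkIdx ep1 ep2 lrj j = v ∧ linkIdx ep1 ep2 lrl l = v := by
    rcases lt_or_gt_of_ne hjne with h | h
    · exact ⟨j1, j2, lr1, lr2, h, hlr1, hlr2⟩
    · exact ⟨j2, j1, lr2, lr1, h, hlr2, hlr1⟩
  -- the induced 4-cycle
  set G' := reductionGraph n m p q p' q' ep1 ep2 with hG'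
  set a : RVert n m p q p' q' := .vK2 v ⟨0, hq⟩ with ha
  set b : RVert n m p q p' q' := .link lrj false j with hb
  set c : RVert n m p q p' q' := .eK1 j ⟨0, hq'⟩ with hc
  set d : RVert n m p q p' q' := .link lrl false l with hd
  have hab : G'.Adj a b := by
    refine ⟨by simp [ha, hb], Or.inr ?_⟩
    show linkIdx ep1 ep2 lrj j ≤ v
    exact hvj.le
  have hbc : G'.Adj b c := by
    refine ⟨by simp [hb, hc], Or.inl ?_⟩
    show j ≤ j
    exact le_refl j
  have hcd : G'.Adj c d := by
    refine ⟨by simp [hc, hd], Or.inr ?_⟩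
    show j ≤ l
    exact hjl.le
  have hda : G'.Adj d a := by
    refine ⟨by simp [hd, ha], Or.inl ?_⟩
    show linkIdx ep1 ep2 lrl l ≤ v
    exact hvl.le
  have hac : ¬ G'.Adj a c := by
    rintro ⟨-, h | h⟩ <;> exact h
  have hlinklink : ∀ (x y : Bool) (jj ll : Fin m), jj < ll →
      linkIdx ep1 ep2 x jj = v → linkIdx ep1 ep2 y ll = v →
      ¬ radj (p := p) (q := q) (p' := p') (q' := q') ep1 ep2 (.link x false jj) (.link y false ll) := by
    intro x y jj ll hlt' hx hy h
    rcases h with ⟨h1, -⟩ | ⟨h1, -⟩ | ⟨-, h2⟩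
    · rw [hx, hy] at h1; exact lt_irrefl _ h1
    · rw [hx, hy] at h1; exact lt_irrefl _ h1
    · exact absurd h2 hlt'.ne
  have hbd : ¬ G'.Adj b d := by
    rintro ⟨-, h | h⟩
    · exact hlinklink lrj lrl j l hjl hvj hvl h
    · rcases h with ⟨h1, h2⟩ | ⟨h1, h2⟩ | ⟨-, h2⟩
      · rw [hvj, hvl] at h1; exact lt_irrefl _ h1
      · exact absurd h2 (not_le.mpr hjl)
      · exact absurd h2 hjl.ne'
  have hneac : a ≠ c := by simp [ha, hc]
  have hnebd : b ≠ d := by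
    simp only [hb, hd, ne_eq, RVert.link.injEq, not_and]
    intro _ _
    exact hjl.ne
  exact no_induced_C4 hIG hab hbc hcd hda hac hbd hneac hnebd
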